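/- Let A be an n×n complex positive definite matrix and B an n×n positive semidefinite matrix. Then det(I + |ABA^{-1}|²) ≥ det(I + B²), where |ABA^{-1}| = ((ABA^{-1})*(ABA^{-1}))^{1/2} = (A^{-1}BA²BA^{-1})^{1/2}. -/

import Mathlib

open scoped ComplexOrder Matrix Classical

/-- The positive semidefinite square root of a positive semidefinite matrix
(junk value `0` if the matrix is not positive semidefinite). -/
noncomputable def sqrtm {n : ℕ} (A : Matrix (Fin n) (Fin n) ℂ) : Matrix (Fin n) (Fin n) ℂ :=
  if h : A.PosSemidef then
    (h.1.eigenvectorUnitary : Matrix (Fin n) (Fin n) ℂ) *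
      Matrix.diagonal ((↑) ∘ (Real.sqrt ·) ∘ h.1.eigenvalues) *
      (star h.1.eigenvectorUnitary : Matrix (Fin n) (Fin n) ℂ)
  else 0

/-- The absolute value `|X| = (Xᴴ X)^{1/2}` of a matrix. -/
noncomputable def absm {n : ℕ} (X : Matrix (Fin n) (Fin n) ℂ) : Matrix (Fin n) (Fin n) ℂ :=
  sqrtm (Xᴴ * X)

lemma sqrtm_posSemidef {n : ℕ} {A : Matrix (Fin n) (Fin n) ℂ} (h : A.PosSemidef) :
    (sqrtm A).PosSemidef := by
  rw [sqrtm, dif_pos h]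
  have hd : (Matrix.diagonal ((↑) ∘ (Real.sqrt ·) ∘ h.1.eigenvalues) :
      Matrix (Fin n) (Fin n) ℂ).PosSemidef := by
    refine Matrix.PosSemidef.diagonal ?_
    intro i
    simp only [Pi.zero_apply, Function.comp_apply]
    exact Complex.zero_le_real.mpr (Real.sqrt_nonneg _)
  have := hd.mul_mul_conjTranspose_same (h.1.eigenvectorUnitary : Matrix (Fin n) (Fin n) ℂ)
  simpa [Matrix.star_eq_conjTranspose] using this

lemma sqrtm_mul_self {n : ℕ} {A : Matrix (Fin n) (Fin n) ℂ} (h : A.PosSemidef) :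
    sqrtm A * sqrtm A = A := by
  rw [sqrtm, dif_pos h]
  have hu : (star h.1.eigenvectorUnitary : Matrix (Fin n) (Fin n) ℂ) *
      (h.1.eigenvectorUnitary : Matrix (Fin n) (Fin n) ℂ) = 1 := Unitary.coe_star_mul_self _
  simp only [Matrix.mul_assoc]
  rw [← Matrix.mul_assoc (star _) (h.1.eigenvectorUnitary : Matrix (Fin n) (Fin n) ℂ), hu,
    Matrix.one_mul, ← Matrix.mul_assoc (Matrix.diagonal _), Matrix.diagonal_mul_diagonal]
  conv_rhs => rw [h.1.spectral_theorem]
  rw [Unitary.conjStarAlgAut_apply, Matrix.mul_assoc]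
  congr 3
  funext i
  simp only [Function.comp_apply]
  rw [← Complex.ofReal_mul, Real.mul_self_sqrt (h.eigenvalues_nonneg i)]
  rfl

open Matrix

lemma one_le_det_one_add {n : ℕ} {T : Matrix (Fin n) (Fin n) ℂ} (hT : T.PosSemidef) :
    (1 : ℂ) ≤ (1 + T).det := by
  have hH := hT.isHermitian
  set U : Matrix (Fin n) (Fin n) ℂ := (hH.eigenvectorUnitary : Matrix (Fin n) (Fin n) ℂ) with hUdef
  have hU : U * star U = 1 := (Matrix.mem_unitaryGroup_iff).mp (hH.eigenvectorUnitary).2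
  have h1 : U * (1 + diagonal (RCLike.ofReal ∘ hH.eigenvalues)) * star U = 1 + T := by
    rw [Matrix.mul_add, Matrix.mul_one, Matrix.add_mul, hU]
    conv_rhs => rw [hH.spectral_theorem]
    rfl
  have h2 : (1 + T).det = ((1 + diagonal (RCLike.ofReal ∘ hH.eigenvalues) : Matrix (Fin n) (Fin n) ℂ)).det := by
    rw [← h1, Matrix.det_mul, Matrix.det_mul, mul_right_comm, ← Matrix.det_mul, hU,
      Matrix.det_one, one_mul]
  have h3 : (1 : ℝ) ≤ ∏ i, (1 + hH.eigenvalues i) := by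
    calc (1 : ℝ) = ∏ _i : Fin n, (1 : ℝ) := by simp
      _ ≤ ∏ i, (1 + hH.eigenvalues i) :=
        Finset.prod_le_prod (fun i _ => by norm_num)
          (fun i _ => le_add_of_nonneg_right (hT.eigenvalues_nonneg i))
  rw [h2, ← Matrix.diagonal_one, Matrix.diagonal_add, Matrix.det_diagonal]
  simp only [Pi.add_apply, Function.comp_apply, Pi.one_apply]
  calc (1 : ℂ) = ((1 : ℝ) : ℂ) := by norm_num
    _ ≤ ((∏ i, (1 + hH.eigenvalues i) : ℝ) : ℂ) := Complex.real_le_real.mpr h3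
    _ = ∏ i, ((1 : ℂ) + (hH.eigenvalues i : ℝ)) := by push_cast; rfl

lemma det_le_det_add {n : ℕ} {D S : Matrix (Fin n) (Fin n) ℂ}
    (hD : D.PosDef) (hS : S.PosSemidef) : D.det ≤ (D + S).det := by
  set Q := sqrtm D with hQdef
  have hQps : Q.PosSemidef := sqrtm_posSemidef hD.posSemidef
  have hQsq : Q * Q = D := sqrtm_mul_self hD.posSemidef
  have hdet : Q.det * Q.det = D.det := by rw [← Matrix.det_mul, hQsq]
  have hQdet : IsUnit Q.det := by
    refine isUnit_iff_ne_zero.mpr fun h => hD.det_pos.ne' ?_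
    rw [← hdet, h, mul_zero]
  have hQinv : Q * Q⁻¹ = 1 := Matrix.mul_nonsing_inv _ hQdet
  have hQinv' : Q⁻¹ * Q = 1 := Matrix.nonsing_inv_mul _ hQdet
  have hT : (Q⁻¹ * S * Q⁻¹).PosSemidef := by
    have := hS.conjTranspose_mul_mul_same Q⁻¹
    rwa [Matrix.conjTranspose_nonsing_inv, hQps.isHermitian.eq] at this
  have hdecomp : D + S = Q * (1 + Q⁻¹ * S * Q⁻¹) * Q := by
    rw [Matrix.mul_add, Matrix.mul_one, Matrix.add_mul, hQsq]
    congr 1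
    simp only [← Matrix.mul_assoc]
    rw [hQinv, Matrix.one_mul, Matrix.mul_assoc, hQinv', Matrix.mul_one]
  rw [hdecomp, Matrix.det_mul, Matrix.det_mul, mul_right_comm, hdet]
  exact le_mul_of_one_le_right hD.det_pos.le (one_le_det_one_add hT)

lemma posDef_conj {n : ℕ} {P R : Matrix (Fin n) (Fin n) ℂ} (hP : P.PosDef)
    (hR : IsUnit R.det) : (Rᴴ * P * R).PosDef := by
  refine Matrix.PosDef.of_dotProduct_mulVec_pos
    (Matrix.isHermitian_conjTranspose_mul_mul R hP.isHermitian) fun x hx => ?_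
  have hinj : Function.Injective (R.mulVec) :=
    Matrix.mulVec_injective_iff_isUnit.mpr ((Matrix.isUnit_iff_isUnit_det R).mpr hR)
  have hx' : R *ᵥ x ≠ 0 := fun h => hx (hinj (by simpa using h))
  have key : star x ⬝ᵥ ((Rᴴ * P * R) *ᵥ x) = star (R *ᵥ x) ⬝ᵥ (P *ᵥ (R *ᵥ x)) := by
    rw [star_mulVec, ← Matrix.dotProduct_mulVec, Matrix.mulVec_mulVec, Matrix.mulVec_mulVec]
  rw [key]
  exact hP.dotProduct_mulVec_pos hx'

/-- For positive definite `A` and positive semidefinite `B`,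
`det(I + |A B A⁻¹|²) ≥ det(I + B²)`. -/
theorem det_one_add_sq_le_det_one_add_abs_conj_sq {n : ℕ}
    (A B : Matrix (Fin n) (Fin n) ℂ) (hA : A.PosDef) (hB : B.PosSemidef) :
    (1 + B ^ 2).det ≤ (1 + absm (A * B * A⁻¹) ^ 2).det := by
  set X := A * B * A⁻¹ with hX
  have hXX : (Xᴴ * X).PosSemidef := Matrix.posSemidef_conjTranspose_mul_self X
  have habs : absm X ^ 2 = Xᴴ * X := by
    rw [absm, pow_two]
    exact sqrtm_mul_self hXX
  rw [habs]
  set P : Matrix (Fin n) (Fin n) ℂ := 1 + X * Xᴴ with hPdef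
  set Q : Matrix (Fin n) (Fin n) ℂ := 1 + Xᴴ * X with hQdef
  set R : Matrix (Fin n) (Fin n) ℂ := 1 + X * X with hRdef
  have hAdet : IsUnit A.det := hA.det_pos.ne'.isUnit
  have hAinv : A⁻¹ * A = 1 := Matrix.nonsing_inv_mul _ hAdet
  have hXsq : X * X = A * (B * B) * A⁻¹ := by
    calc X * X = A * B * (A⁻¹ * A) * B * A⁻¹ := by
          rw [hX]; simp only [Matrix.mul_assoc]
      _ = A * (B * B) * A⁻¹ := by rw [hAinv, Matrix.mul_one]; simp only [Matrix.mul_assoc]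
  have hdetR : R.det = (1 + B ^ 2).det := by
    rw [hRdef, hXsq, Matrix.det_one_add_mul_comm, ← Matrix.mul_assoc, hAinv, Matrix.one_mul,
      pow_two]
  have hBBpd : (1 + B ^ 2).PosDef := Matrix.PosDef.one.add_posSemidef (hB.pow 2)
  have hRdet : IsUnit R.det := by rw [hdetR]; exact hBBpd.det_pos.ne'.isUnit
  have hPpd : P.PosDef := Matrix.PosDef.one.add_posSemidef (Matrix.posSemidef_self_mul_conjTranspose X)
  have hQpd : Q.PosDef := Matrix.PosDef.one.add_posSemidef hXX
  haveI : Invertible P := hPpd.isUnit.invertible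
  have hblocks : Matrix.fromBlocks P R Rᴴ Q
      = Matrix.fromBlocks 1 X 1 Xᴴ * (Matrix.fromBlocks 1 X 1 Xᴴ)ᴴ := by
    simp [Matrix.fromBlocks_conjTranspose, Matrix.fromBlocks_multiply, Matrix.conjTranspose_mul,
      Matrix.conjTranspose_add, hPdef, hQdef, hRdef]
  have hGps : (Matrix.fromBlocks P R Rᴴ Q).PosSemidef := by
    rw [hblocks]; exact Matrix.posSemidef_self_mul_conjTranspose _
  have hSchur : (Q - Rᴴ * P⁻¹ * R).PosSemidef :=
    (Matrix.PosDef.fromBlocks₁₁ R Q hPpd).mp hGps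
  have hMid : (Rᴴ * P⁻¹ * R).PosDef := posDef_conj hPpd.inv hRdet
  have hle : (Rᴴ * P⁻¹ * R).det ≤ Q.det := by
    have h := det_le_det_add hMid hSchur
    rwa [show Rᴴ * P⁻¹ * R + (Q - Rᴴ * P⁻¹ * R) = Q by abel] at h
  have hPQ : P.det = Q.det := by rw [hPdef, hQdef, Matrix.det_one_add_mul_comm]
  have hPdetinv : P⁻¹.det = (P.det)⁻¹ := by
    rw [Matrix.det_nonsing_inv, Ring.inverse_eq_inv]
  have hdetmid : (Rᴴ * P⁻¹ * R).det = star R.det * (Q.det)⁻¹ * R.det := by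
    rw [Matrix.det_mul, Matrix.det_mul, Matrix.det_conjTranspose, hPdetinv, hPQ]
  -- pass to real numbers
  have hr : (1 : ℂ) ≤ (1 + B ^ 2).det := one_le_det_one_add (hB.pow 2)
  have hq : (1 : ℂ) ≤ Q.det := by rw [hQdef]; exact one_le_det_one_add hXX
  set r := (1 + B ^ 2).det with hrdef
  set q := Q.det with hqdef
  obtain ⟨hr1, hri⟩ := Complex.le_def.mp hr
  obtain ⟨hq1, hqi⟩ := Complex.le_def.mp hq
  simp only [Complex.one_re, Complex.one_im] at hr1 hri hq1 hqi
  have hreq : r = (r.re : ℂ) := Complex.ext rfl (by simp [← hri])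
  have hqeq : q = (q.re : ℂ) := Complex.ext rfl (by simp [← hqi])
  have hineq : (r.re : ℂ) * (q.re : ℂ)⁻¹ * (r.re : ℂ) ≤ (q.re : ℂ) := by
    have := hle
    rw [hdetmid, hdetR, hreq, hqeq, Complex.star_def, Complex.conj_ofReal] at this
    exact this
  have hrealineq : r.re * (q.re)⁻¹ * r.re ≤ q.re := by
    rw [show ((r.re : ℂ) * (q.re : ℂ)⁻¹ * (r.re : ℂ)) = ((r.re * (q.re)⁻¹ * r.re : ℝ) : ℂ)
      by push_cast; ring] at hineq
    exact Complex.real_le_real.mp hineq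
  have hbpos : (0 : ℝ) < q.re := lt_of_lt_of_le one_pos hq1
  have hsq : r.re * r.re ≤ q.re * q.re := by
    have h := mul_le_mul_of_nonneg_right hrealineq hbpos.le
    rwa [show r.re * (q.re)⁻¹ * r.re * q.re = r.re * r.re * ((q.re)⁻¹ * q.re) by ring,
      inv_mul_cancel₀ hbpos.ne', mul_one] at h
  have hab : r.re ≤ q.re := by nlinarith
  calc r = (r.re : ℂ) := hreq
    _ ≤ (q.re : ℂ) := Complex.real_le_real.mpr hab
    _ = q := hqeq.symm
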